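/- Let q be a primitive p-th root of unity with p odd, p = p' ≥ 3, and let a, b, λ ∈ ℂ with λ ≠ 0. On the p'-dimensional space with basis |j⟩, j = 0,…,p'−1, the operators T(q^H)|i⟩ = q^{-i}λ|i⟩, T(F)|i⟩ = |i+1⟩ for i < p'−1, T(F)|p'−1⟩ = b|0⟩, T(E)|0⟩ = a|p'−1⟩, T(E)|i⟩ = (ab + [i](λ²q^{1−i} − λ⁻²q^{i−1})/(q − q^{-1}))|i−1⟩ for i > 0, satisfy the U_q(sl_2) relations: T(q^H)T(E)T(q^H)⁻¹ = qT(E), T(q^H)T(F)T(q^H)⁻¹ = q⁻¹T(F), and T(E)T(F) − T(F)T(E) = (T(q^H)² − T(q^H)⁻²)/(q − q^{-1}). -/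

import Mathlib

noncomputable section

/-- Basis vector of `Fin p → ℂ` indexed by an integer `k ∈ {0, …, p-1}`. -/
def ep (p : ℕ) (k : ℤ) : Fin p → ℂ := fun j => if (j : ℤ) = k then 1 else 0

/-- The `q`-number `[t] = (q^t - q^{-t})/(q - q⁻¹)`. -/
def qnum (q : ℂ) (t : ℤ) : ℂ := (q ^ t - q ^ (-t)) / (q - q⁻¹)

/-- Auxiliary cancellation lemma. -/
theorem aux_cancel (A P Q P' Q' D s : ℂ) (hs : s ≠ 0) (h : P * Q - P' * Q' = s * D) :
    A + P / s * Q / s - (A + P' / s * Q' / s) = s⁻¹ * D := by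
  have h2 : A + P / s * Q / s - (A + P' / s * Q' / s) = (P * Q - P' * Q') / s ^ 2 := by
    rw [div_mul_eq_mul_div, div_div, div_mul_eq_mul_div, div_div,
      add_sub_add_left_eq_sub, div_sub_div_same, sq]
  rw [h2, h, sq, mul_div_mul_left _ _ hs, inv_mul_eq_div]

set_option maxHeartbeats 1600000 in
/-- For `q` a primitive `p`-th root of unity, `p` odd, `p = p' ≥ 3`, the
operators of the representation `T_{abλ}` on the `p'`-dimensional space satisfy
the `U_q(sl_2)` relations. -/
theorem stmt_16 (p : ℕ) (hp3 : 3 ≤ p) (hpodd : Odd p) (q : ℂ)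
    (hqp : q ^ p = 1) (hprim : ∀ k : ℕ, 0 < k → k < p → q ^ k ≠ 1)
    (a b lam : ℂ) (hlam : lam ≠ 0)
    (Tk TkInv TE TF : Module.End ℂ (Fin p → ℂ))
    (hKi : Tk * TkInv = 1) (hiK : TkInv * Tk = 1)
    (hK : ∀ i : ℤ, 0 ≤ i → i < p → Tk (ep p i) = (q ^ (-i) * lam) • ep p i)
    (hF1 : ∀ i : ℤ, 0 ≤ i → i < (p : ℤ) - 1 → TF (ep p i) = ep p (i + 1))
    (hF2 : TF (ep p ((p : ℤ) - 1)) = b • ep p 0)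
    (hE0 : TE (ep p 0) = a • ep p ((p : ℤ) - 1))
    (hE : ∀ i : ℤ, 0 < i → i < p →
      TE (ep p i) = (a * b + qnum q i *
        (lam ^ 2 * q ^ (1 - i) - (lam⁻¹) ^ 2 * q ^ (i - 1)) / (q - q⁻¹)) • ep p (i - 1)) :
    Tk * TE * TkInv = q • TE ∧ Tk * TF * TkInv = q⁻¹ • TF ∧
    TE * TF - TF * TE = (q - q⁻¹)⁻¹ • (Tk ^ 2 - TkInv ^ 2) := by
  have hp3' : (3:ℤ) ≤ (p:ℤ) := by exact_mod_cast hp3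
  have hq0 : q ≠ 0 := by
    intro h
    rw [h, zero_pow (by omega : p ≠ 0)] at hqp
    exact zero_ne_one hqp
  have hq2 : q ^ (2:ℕ) ≠ 1 := hprim 2 (by norm_num) (by omega)
  have hq21 : q ^ (2:ℕ) - 1 ≠ 0 := sub_ne_zero.mpr hq2
  have hq21' : 1 - q ^ (2:ℕ) ≠ 0 := by
    intro h; apply hq21; rw [← neg_sub (q ^ (2:ℕ)) 1] at h; exact neg_eq_zero.mp h
  have hqq : q - q⁻¹ ≠ 0 := by
    intro h
    apply hq2
    have h' : q = q⁻¹ := sub_eq_zero.mp h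
    calc q ^ (2:ℕ) = q * q := sq q
    _ = q * q⁻¹ := by rw [← h']
    _ = 1 := mul_inv_cancel₀ hq0
  have hs : q - q⁻¹ = (q ^ (2:ℕ) - 1)/q := by
    rw [eq_div_iff hq0, sub_mul, inv_mul_cancel₀ hq0]; ring
  have hqpz : q ^ ((p:ℤ)) = 1 := by rw [zpow_natCast]; exact hqp
  have hqm : q ^ ((p:ℤ)-1) = q⁻¹ := by rw [zpow_sub₀ hq0, hqpz, zpow_one, one_div]
  have hqmn : q ^ (-((p:ℤ)-1)) = q := by rw [zpow_neg, hqm, inv_inv]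
  have hz2 : q ^ (2:ℤ) = q * q := by
    rw [show (2:ℤ)=1+1 by norm_num, zpow_add₀ hq0, zpow_one]
  have hA : q ^ ((1:ℤ) - ((p:ℤ)-1)) = q * q := by
    rw [show (1:ℤ)-((p:ℤ)-1) = 2-(p:ℤ) by ring, zpow_sub₀ hq0, hqpz, hz2, div_one]
  have hB : q ^ (((p:ℤ)-1) - 1) = (q * q)⁻¹ := by
    rw [show ((p:ℤ)-1)-1 = -(2-(p:ℤ)) by ring, zpow_neg, zpow_sub₀ hq0, hqpz, hz2, div_one]
  have hKinv : ∀ i : ℤ, 0 ≤ i → i < p → TkInv (ep p i) = (q ^ i * lam⁻¹) • ep p i := by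
    intro i h0 h1
    have ht : q ^ i ≠ 0 := zpow_ne_zero _ hq0
    have h3 : (q ^ (-i) * lam) • TkInv (ep p i) = ep p i := by
      rw [← map_smul, ← hK i h0 h1, ← Module.End.mul_apply, hiK, Module.End.one_apply]
    have hone : q ^ i * lam⁻¹ * (q ^ (-i) * lam) = 1 := by
      rw [zpow_neg]; field_simp
    calc TkInv (ep p i) = (q ^ i * lam⁻¹) • ((q ^ (-i) * lam) • TkInv (ep p i)) := by
          rw [smul_smul, hone, one_smul]
    _ = (q ^ i * lam⁻¹) • ep p i := by rw [h3]
  have hepj : ∀ j : Fin p, (Pi.single j 1 : Fin p → ℂ) = ep p (j : ℤ) := by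
    intro j
    funext j'
    by_cases h : j' = j
    · simp [ep, Pi.single_apply, h]
    · have h2 : ¬((j':ℤ) = (j:ℤ)) := fun hh => h (Fin.ext (by exact_mod_cast hh))
      simp [ep, Pi.single_apply, h, h2]
  refine ⟨?_, ?_, ?_⟩
  · apply (Pi.basisFun ℂ (Fin p)).ext
    intro j
    rw [Pi.basisFun_apply, hepj j]
    have hi0 : (0:ℤ) ≤ (j:ℤ) := Int.natCast_nonneg _
    have hip : ((j:ℤ)) < (p:ℤ) := by exact_mod_cast j.isLt
    have ht : q ^ ((j:ℤ)) ≠ 0 := zpow_ne_zero _ hq0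
    simp only [Module.End.mul_apply, LinearMap.smul_apply]
    rw [hKinv _ hi0 hip]
    simp only [map_smul]
    by_cases h0 : (j:ℤ) = 0
    · rw [h0, hE0]
      simp only [map_smul]
      rw [hK ((p:ℤ)-1) (by omega) (by omega), hqmn]
      simp only [smul_smul]
      congr 1
      simp only [zpow_zero]
      field_simp
    · rw [hE _ (by omega) hip]
      simp only [map_smul]
      rw [hK ((j:ℤ)-1) (by omega) (by omega)]
      simp only [smul_smul]
      congr 1
      rw [show -((j:ℤ)-1) = 1 - (j:ℤ) by ring, zpow_sub₀ hq0, zpow_one]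
      field_simp
  · apply (Pi.basisFun ℂ (Fin p)).ext
    intro j
    rw [Pi.basisFun_apply, hepj j]
    have hi0 : (0:ℤ) ≤ (j:ℤ) := Int.natCast_nonneg _
    have hip : ((j:ℤ)) < (p:ℤ) := by exact_mod_cast j.isLt
    have ht : q ^ ((j:ℤ)) ≠ 0 := zpow_ne_zero _ hq0
    simp only [Module.End.mul_apply, LinearMap.smul_apply]
    rw [hKinv _ hi0 hip]
    simp only [map_smul]
    by_cases h0 : (j:ℤ) = (p:ℤ) - 1
    · rw [h0, hF2]
      simp only [map_smul]
      rw [hK 0 le_rfl (by omega), hqm]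
      simp only [smul_smul]
      congr 1
      simp only [neg_zero, zpow_zero]
      field_simp
    · rw [hF1 _ hi0 (by omega), hK ((j:ℤ)+1) (by omega) (by omega)]
      simp only [smul_smul]
      congr 1
      rw [show -((j:ℤ)+1) = -1 - (j:ℤ) by ring, zpow_sub₀ hq0,
        show (-1:ℤ) = -(1:ℤ) from rfl, zpow_neg, zpow_one]
      field_simp
  · apply (Pi.basisFun ℂ (Fin p)).ext
    intro j
    rw [Pi.basisFun_apply, hepj j]
    have hi0 : (0:ℤ) ≤ (j:ℤ) := Int.natCast_nonneg _
    have hip : ((j:ℤ)) < (p:ℤ) := by exact_mod_cast j.isLt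
    have ht : q ^ ((j:ℤ)) ≠ 0 := zpow_ne_zero _ hq0
    simp only [LinearMap.sub_apply, LinearMap.smul_apply, pow_two, Module.End.mul_apply]
    rw [hK _ hi0 hip, hKinv _ hi0 hip]
    simp only [map_smul]
    rw [hK _ hi0 hip, hKinv _ hi0 hip]
    by_cases h0 : (j:ℤ) = 0
    · rw [h0, hF1 0 le_rfl (by omega), zero_add, hE 1 one_pos (by omega),
        show (1:ℤ) - 1 = 0 by norm_num, hE0]
      simp only [map_smul]
      rw [hF2]
      simp only [smul_smul, smul_sub, ← sub_smul]
      congr 1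
      simp only [qnum, zpow_zero, zpow_one, zpow_neg, neg_zero]
      simp only [hs]
      field_simp
      ring
    · by_cases h1 : (j:ℤ) = (p:ℤ) - 1
      · rw [h1, hF2, hE _ (by omega) (by omega)]
        simp only [map_smul]
        rw [hE0, hF1 ((p:ℤ)-1-1) (by omega) (by omega),
          show (p:ℤ)-1-1+1 = (p:ℤ)-1 by ring]
        simp only [smul_smul, smul_sub, ← sub_smul]
        congr 1
        simp only [qnum, hqm, hqmn, hA, hB]
        have h2 : (q⁻¹ - q) / (q - q⁻¹) = -1 := by rw [div_eq_iff hqq]; ring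
        rw [h2]
        field_simp
        ring
      · rw [hF1 _ hi0 (by omega), hE _ (by omega) (by omega),
          show (j:ℤ)+1-1 = (j:ℤ) by ring,
          hE _ (by omega) hip]
        simp only [map_smul]
        rw [hF1 ((j:ℤ)-1) (by omega) (by omega),
          show (j:ℤ)-1+1 = (j:ℤ) by ring]
        simp only [smul_smul, smul_sub, ← sub_smul]
        congr 1
        simp only [qnum, zpow_add₀ hq0, zpow_sub₀ hq0, zpow_neg, zpow_one]
        generalize hgen : q ^ ((j:ℤ)) = t at ht ⊢
        apply aux_cancel _ _ _ _ _ _ _ hqq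
        field_simp
        ring_nf
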